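/- Let n be a positive integer and let S be a sequence over the cyclic group C_n of length 2n − 2. Then S has no zero-sum subsequence of length n if and only if S = g^{n−1} · (g + e)^{n−1} for some g, e ∈ C_n with e a generator of C_n. -/

import Mathlib

open Multiset

namespace Stmt14

def NoZS (n : ℕ) (S : Multiset (ZMod n)) : Prop :=
  ∀ T ≤ S, Multiset.card T = n → T.sum ≠ 0

def Good (n : ℕ) (S : Multiset (ZMod n)) : Prop :=
  ∃ g e : ZMod n, addOrderOf e = n ∧
    S = Multiset.replicate (n - 1) g + Multiset.replicate (n - 1) (g + e)

def P (n : ℕ) : Prop :=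
  ∀ S : Multiset (ZMod n), Multiset.card S = 2 * n - 2 → NoZS n S → Good n S

section Util

variable {α β : Type*}

lemma lift_le_map [DecidableEq α] {f : α → β} :
    ∀ {t : Multiset β} {R : Multiset α}, t ≤ R.map f → ∃ B ≤ R, B.map f = t := by
  intro t
  induction t using Multiset.induction with
  | empty => exact fun _ => ⟨0, Multiset.zero_le _, rfl⟩
  | cons a t ih =>
    intro R h
    have ha : a ∈ R.map f := mem_of_le h (mem_cons_self a t)
    obtain ⟨r, hr, rfl⟩ := Multiset.mem_map.1 ha
    have hR : R = r ::ₘ R.erase r := (Multiset.cons_erase hr).symm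
    have h2 : t ≤ (R.erase r).map f := by
      have h' := h
      rw [hR, Multiset.map_cons, Multiset.cons_le_cons_iff] at h'
      exact h'
    obtain ⟨B, hB, rfl⟩ := ih h2
    exact ⟨r ::ₘ B, by rw [hR]; exact Multiset.cons_le_cons r hB, by rw [Multiset.map_cons]⟩

lemma card_msum : ∀ (Ms : Multiset (Multiset α)),
    Multiset.card Ms.sum = (Ms.map Multiset.card).sum := by
  intro Ms
  induction Ms using Multiset.induction with
  | empty => simp
  | cons a s ih => simp [ih]

lemma mem_msum {a : α} : ∀ {Ms : Multiset (Multiset α)},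
    a ∈ Ms.sum ↔ ∃ B ∈ Ms, a ∈ B := by
  intro Ms
  induction Ms using Multiset.induction with
  | empty => simp
  | cons b s ih =>
    simp only [Multiset.sum_cons, Multiset.mem_add, ih, Multiset.mem_cons]
    constructor
    · rintro (h | ⟨B, hB, h⟩)
      · exact ⟨b, Or.inl rfl, h⟩
      · exact ⟨B, Or.inr hB, h⟩
    · rintro ⟨B, (rfl | hB), h⟩
      · exact Or.inl h
      · exact Or.inr ⟨B, hB, h⟩

lemma sum_msum {γ : Type*} [AddCommMonoid γ] : ∀ (Ms : Multiset (Multiset γ)),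
    Ms.sum.sum = (Ms.map Multiset.sum).sum := by
  intro Ms
  induction Ms using Multiset.induction with
  | empty => simp
  | cons a s ih => simp [ih]

lemma map_msum (f : α → β) : ∀ (Ms : Multiset (Multiset α)),
    Ms.sum.map f = (Ms.map (Multiset.map f)).sum := by
  intro Ms
  induction Ms using Multiset.induction with
  | empty => simp
  | cons a s ih => simp [ih]

lemma count_msum [DecidableEq α] (a : α) : ∀ (Ms : Multiset (Multiset α)),
    Multiset.count a Ms.sum = (Ms.map (Multiset.count a)).sum := by
  intro Ms
  induction Ms using Multiset.induction with
  | empty => simp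
  | cons b s ih => simp [ih]

lemma msum_le_msum {Cs Bs : Multiset (Multiset α)} (h : Cs ≤ Bs) : Cs.sum ≤ Bs.sum := by
  obtain ⟨D, rfl⟩ := Multiset.le_iff_exists_add.1 h
  rw [Multiset.sum_add]
  exact le_add_right _ _

/-- two-valued multiset decomposition -/
lemma twoval [DecidableEq α] {M : Multiset α} {a b : α} (hab : a ≠ b)
    (h : ∀ x ∈ M, x = a ∨ x = b) :
    M = Multiset.replicate (M.count a) a + Multiset.replicate (M.count b) b := by
  refine Multiset.ext.2 fun x => ?_
  rw [Multiset.count_add, Multiset.count_replicate, Multiset.count_replicate]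
  by_cases hxa : x = a
  · subst hxa
    simp [hab.symm]
  · by_cases hxb : x = b
    · subst hxb
      simp [hab, Ne.symm hxa]
    · have : x ∉ M := fun hx => by rcases h x hx with rfl | rfl <;> simp_all
      simp [Multiset.count_eq_zero_of_notMem this, Ne.symm hxa, Ne.symm hxb]

lemma pair_le [DecidableEq α] {s t : α} {S : Multiset α} (hs : s ∈ S) (ht : t ∈ S)
    (hne : s ≠ t) : ({s, t} : Multiset α) ≤ S := by
  have hs' : s ∈ S.erase t := (Multiset.mem_erase_of_ne hne).2 hs
  have h1 : ({s, t} : Multiset α) = t ::ₘ {s} := Multiset.pair_comm s t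
  rw [h1, ← Multiset.cons_erase ht]
  exact Multiset.cons_le_cons t (Multiset.singleton_le.2 hs')

lemma triple_le [DecidableEq α] {s t u : α} {S : Multiset α} (hs : s ∈ S) (ht : t ∈ S)
    (hu : u ∈ S) (h1 : s ≠ t) (h2 : s ≠ u) (h3 : t ≠ u) :
    ({s, t, u} : Multiset α) ≤ S := by
  have ht' : t ∈ S.erase s := (Multiset.mem_erase_of_ne (Ne.symm h1)).2 ht
  have hu' : u ∈ S.erase s := (Multiset.mem_erase_of_ne (Ne.symm h2)).2 hu
  have hp : ({t, u} : Multiset α) ≤ S.erase s := pair_le ht' hu' h3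
  have h4 : ({s, t, u} : Multiset α) = s ::ₘ {t, u} := rfl
  rw [h4, ← Multiset.cons_erase hs]
  exact Multiset.cons_le_cons s hp

end Util

/-- order of nonzero elements mod a prime -/
lemma ord_prime {p : ℕ} (hp : p.Prime) {e : ZMod p} (he : e ≠ 0) : addOrderOf e = p := by
  haveI : NeZero p := ⟨hp.ne_zero⟩
  have h1 : p • e = 0 := by
    rw [nsmul_eq_mul, ZMod.natCast_self, zero_mul]
  have h2 : addOrderOf e ∣ p := addOrderOf_dvd_of_nsmul_eq_zero h1
  rcases (Nat.Prime.eq_one_or_self_of_dvd hp _ h2) with h | h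
  · exact absurd (AddMonoid.addOrderOf_eq_one_iff.1 h) he
  · exact h

/-- The easy direction. -/
lemma easy (n : ℕ) (hn : 0 < n) (g e : ZMod n) (he : addOrderOf e = n) :
    NoZS n (Multiset.replicate (n - 1) g + Multiset.replicate (n - 1) (g + e)) := by
  intro T hT hcard hsum
  rcases Nat.eq_or_lt_of_le hn with h1 | h2
  · -- n = 1
    have hc : Multiset.card (Multiset.replicate (n-1) g + Multiset.replicate (n-1) (g+e)) = 0 := by
      simp [← h1]
    have := Multiset.card_le_card hT
    omega
  -- n ≥ 2
  have hn2 : 2 ≤ n := h2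
  have he0 : e ≠ 0 := by
    intro h
    rw [h, addOrderOf_zero] at he
    omega
  have hge : g ≠ g + e := by
    intro h
    exact he0 (by linear_combination -h)
  have hmem : ∀ x ∈ T, x = g ∨ x = g + e := by
    intro x hx
    have := Multiset.mem_of_le hT hx
    rcases Multiset.mem_add.1 this with h | h
    · exact Or.inl (Multiset.eq_of_mem_replicate h)
    · exact Or.inr (Multiset.eq_of_mem_replicate h)
  have hTeq := twoval hge hmem
  set a := T.count g with ha
  set b := T.count (g+e) with hb
  have hcards : a + b = n := by
    have h := congrArg Multiset.card hTeq
    simp [hcard] at h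
    omega
  have hble : b ≤ n - 1 := by
    have h1 : b ≤ Multiset.count (g+e) (Multiset.replicate (n-1) g + Multiset.replicate (n-1) (g+e)) :=
      Multiset.count_le_of_le _ hT
    rwa [Multiset.count_add, Multiset.count_replicate, Multiset.count_replicate,
      if_pos rfl, if_neg hge, zero_add] at h1
  have hale : a ≤ n - 1 := by
    have h1 : a ≤ Multiset.count g (Multiset.replicate (n-1) g + Multiset.replicate (n-1) (g+e)) :=
      Multiset.count_le_of_le _ hT
    rwa [Multiset.count_add, Multiset.count_replicate, Multiset.count_replicate,
      if_pos rfl, if_neg (Ne.symm hge), add_zero] at h1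
  have hsum2 : T.sum = b • e := by
    rw [hTeq, Multiset.sum_add, Multiset.sum_replicate, Multiset.sum_replicate, smul_add]
    have : (a • g + (b • g + b • e)) = (a + b) • g + b • e := by
      rw [add_nsmul]; ring
    rw [this, hcards]
    have : n • g = 0 := by rw [nsmul_eq_mul, ZMod.natCast_self, zero_mul]
    rw [this, zero_add]
  rw [hsum2] at hsum
  have : n ∣ b := by
    rw [← he]
    exact addOrderOf_dvd_of_nsmul_eq_zero hsum
  rcases this with ⟨c, hc⟩
  rcases Nat.eq_zero_or_pos c with rfl | hcpos
  · omega
  · have : n * 1 ≤ n * c := Nat.mul_le_mul_left n hcpos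
    omega

section Smalls

lemma P1 : P 1 := by
  intro S hcard _
  have : S = 0 := Multiset.card_eq_zero.1 (by simpa using hcard)
  subst this
  exact ⟨0, 0, by simp [addOrderOf_zero], by simp⟩

lemma card_succ {α : Type*} [DecidableEq α] {s : Multiset α} {k : ℕ} (h : Multiset.card s = k + 1) :
    ∃ a t, s = a ::ₘ t ∧ Multiset.card t = k := by
  have hne : s ≠ 0 := by intro h0; rw [h0] at h; simp at h
  obtain ⟨a, ha⟩ := Multiset.exists_mem_of_ne_zero hne
  exact ⟨a, s.erase a, (Multiset.cons_erase ha).symm, by rw [Multiset.card_erase_of_mem ha, h]; rfl⟩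

lemma P2 : P 2 := by
  intro S hcard hNo
  obtain ⟨a, b, rfl⟩ := Multiset.card_eq_two.1 (by simpa using hcard)
  have hab : a + b ≠ 0 := by
    intro h
    exact hNo {a, b} le_rfl (by simp) (by simpa using h)
  clear hNo hcard
  have hb : b = a + 1 := by
    have : ∀ a b : ZMod 2, a + b ≠ 0 → b = a + 1 := by decide
    exact this a b hab
  refine ⟨a, 1, ZMod.addOrderOf_one 2, ?_⟩
  subst hb
  simp [Multiset.replicate_one]

lemma NoZS_iff_powersetCard (n : ℕ) (S : Multiset (ZMod n)) :
    NoZS n S ↔ ∀ T ∈ Multiset.powersetCard n S, T.sum ≠ 0 := by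
  constructor
  · intro h T hT
    rw [Multiset.mem_powersetCard] at hT
    exact h T hT.1 hT.2
  · intro h T hT hc
    exact h T (Multiset.mem_powersetCard.2 ⟨hT, hc⟩)

lemma P3 : P 3 := by
  intro S hcard hNo
  have h4 : Multiset.card S = 4 := by simpa using hcard
  obtain ⟨a, S1, rfl, h3⟩ := card_succ h4
  obtain ⟨b, S2, rfl, h2⟩ := card_succ h3
  obtain ⟨c, S3, rfl, h1⟩ := card_succ h2
  obtain ⟨d, S4, rfl, h0⟩ := card_succ h1
  have hS4 : S4 = 0 := Multiset.card_eq_zero.1 h0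
  subst hS4
  rw [NoZS_iff_powersetCard] at hNo
  have key : ∀ a b c d : ZMod 3,
      (∀ T ∈ Multiset.powersetCard 3 (a ::ₘ b ::ₘ c ::ₘ d ::ₘ 0), T.sum ≠ 0) →
      ∃ g e : ZMod 3, e ≠ 0 ∧
        (a ::ₘ b ::ₘ c ::ₘ d ::ₘ 0) =
          Multiset.replicate 2 g + Multiset.replicate 2 (g + e) := by
    decide
  obtain ⟨g, e, he, heq⟩ := key a b c d hNo
  exact ⟨g, e, ord_prime (by norm_num) he, heq⟩

end Smalls

/-- Rigidity: two Good multisets differing in one element are equal there. -/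
lemma lemR {m : ℕ} (hm : 2 ≤ m) {N : Multiset (ZMod m)} {v v' : ZMod m}
    (h1 : Good m (v ::ₘ N)) (h2 : Good m (v' ::ₘ N)) : v = v' := by
  by_contra hne
  obtain ⟨γ, ε, hε, hEq1⟩ := h1
  obtain ⟨γ', ε', hε', hEq2⟩ := h2
  have hε0 : ε ≠ 0 := fun h => by rw [h, addOrderOf_zero] at hε; omega
  have hε0' : ε' ≠ 0 := fun h => by rw [h, addOrderOf_zero] at hε'; omega
  have hγδ : γ ≠ γ + ε := fun h => hε0 (by linear_combination -h)
  have hγδ' : γ' ≠ γ' + ε' := fun h => hε0' (by linear_combination -h)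
  -- v ∈ {γ, γ+ε}
  have hv_mem : v = γ ∨ v = γ + ε := by
    have : v ∈ v ::ₘ N := Multiset.mem_cons_self _ _
    rw [hEq1] at this
    rcases Multiset.mem_add.1 this with h | h
    · exact Or.inl (Multiset.eq_of_mem_replicate h)
    · exact Or.inr (Multiset.eq_of_mem_replicate h)
  have hcount1 : Multiset.count v (v ::ₘ N) = m - 1 := by
    rw [hEq1, Multiset.count_add, Multiset.count_replicate, Multiset.count_replicate]
    rcases hv_mem with rfl | rfl
    · simp [hγδ, Ne.symm hγδ, hε0]
    · simp [hγδ, Ne.symm hγδ, hε0]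
  have hcountN : Multiset.count v N = m - 2 := by
    have := hcount1
    rw [Multiset.count_cons_self] at this
    omega
  have hcount2 : Multiset.count v (v' ::ₘ N) = m - 2 := by
    rw [Multiset.count_cons_of_ne hne, hcountN]
  rcases Nat.lt_or_ge m 3 with hm2 | hm3
  · -- m = 2
    have hm2' : m = 2 := by omega
    subst hm2'
    have hcard : Multiset.card N = 1 := by
      have := congrArg Multiset.card hEq1
      simp at this
      omega
    obtain ⟨w, hw⟩ := Multiset.card_eq_one.1 hcard
    subst hw
    have hwv : w ≠ v := by
      intro h
      subst h
      simp [Multiset.count_singleton] at hcountN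
    have hwv' : w ≠ v' := by
      -- v' count in v' ::ₘ {w} is 1 (= m-1)
      have hv'_mem : v' = γ' ∨ v' = γ' + ε' := by
        have : v' ∈ v' ::ₘ ({w} : Multiset (ZMod 2)) := Multiset.mem_cons_self _ _
        rw [hEq2] at this
        rcases Multiset.mem_add.1 this with h | h
        · exact Or.inl (Multiset.eq_of_mem_replicate h)
        · exact Or.inr (Multiset.eq_of_mem_replicate h)
      have hc : Multiset.count v' (v' ::ₘ ({w} : Multiset (ZMod 2))) = 1 := by
        rw [hEq2, Multiset.count_add, Multiset.count_replicate, Multiset.count_replicate]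
        rcases hv'_mem with rfl | rfl
        · simp [hγδ', Ne.symm hγδ', hε0']
        · simp [hγδ', Ne.symm hγδ', hε0']
      intro h
      subst h
      simp [Multiset.count_cons, Multiset.count_singleton] at hc
    have h3 : ∀ x y z : ZMod 2, x ≠ y → z ≠ x → z ≠ y → False := by decide
    exact h3 v v' w hne hwv hwv' 
  · -- m ≥ 3 : v ∈ v' ::ₘ N since count = m-2 ≥ 1, so v ∈ {γ', δ'} with count m-1. contra
    have hv_in : v ∈ v' ::ₘ N := by
      rw [← Multiset.count_pos, hcount2]
      omega
    have hv_mem' : v = γ' ∨ v = γ' + ε' := by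
      rw [hEq2] at hv_in
      rcases Multiset.mem_add.1 hv_in with h | h
      · exact Or.inl (Multiset.eq_of_mem_replicate h)
      · exact Or.inr (Multiset.eq_of_mem_replicate h)
    have : Multiset.count v (v' ::ₘ N) = m - 1 := by
      rw [hEq2, Multiset.count_add, Multiset.count_replicate, Multiset.count_replicate]
      rcases hv_mem' with rfl | rfl
      · simp [hγδ', Ne.symm hγδ', hε0']
      · simp [hγδ', Ne.symm hγδ', hε0']
    omega

section Composite

variable {p m : ℕ}

/-- reduction mod `p` -/
def pihom (p m : ℕ) : ZMod (p * m) →+* ZMod p := ZMod.castHom (dvd_mul_right p m) (ZMod p)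

/-- embedding of `ZMod m` as the kernel of `pihom` -/
def iot (p m : ℕ) (x : ZMod m) : ZMod (p * m) := ((p * x.val : ℕ) : ZMod (p * m))

def dvp (p m : ℕ) (y : ZMod (p * m)) : ZMod m := ((y.val / p : ℕ) : ZMod m)

def bval (p m : ℕ) (B : Multiset (ZMod (p * m))) : ZMod m := dvp p m B.sum

def IsBlk (p m : ℕ) (B : Multiset (ZMod (p * m))) : Prop :=
  Multiset.card B = p ∧ pihom p m B.sum = 0

def IsDecomp (p m : ℕ) (S : Multiset (ZMod (p * m)))
    (Bs : Multiset (Multiset (ZMod (p * m)))) (rem : Multiset (ZMod (p * m))) : Prop :=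
  S = Bs.sum + rem ∧ Multiset.card Bs = 2 * m - 2 ∧ ∀ B ∈ Bs, IsBlk p m B

lemma modp_mul (k : ℕ) :
    ((p * (k % m) : ℕ) : ZMod (p * m)) = ((p * k : ℕ) : ZMod (p * m)) := by
  have hk : p * k = p * m * (k / m) + p * (k % m) := by
    conv_lhs => rw [← Nat.div_add_mod k m]
    ring
  have h0 : ((p * m * (k / m) : ℕ) : ZMod (p * m)) = 0 := by
    rw [Nat.cast_mul, ZMod.natCast_self, zero_mul]
  rw [hk, Nat.cast_add, h0, zero_add]

lemma iot_add (hm2 : 2 ≤ m) (x y : ZMod m) : iot p m (x + y) = iot p m x + iot p m y := by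
  haveI : NeZero m := ⟨by omega⟩
  unfold iot
  rw [ZMod.val_add, modp_mul, Nat.mul_add, Nat.cast_add]

lemma iot_zero (hm2 : 2 ≤ m) : iot p m 0 = 0 := by
  haveI : NeZero m := ⟨by omega⟩
  simp [iot]

lemma iot_sum (hm2 : 2 ≤ m) (u : Multiset (ZMod m)) :
    (u.map (iot p m)).sum = iot p m u.sum := by
  induction u using Multiset.induction with
  | empty => simp [iot_zero hm2]
  | cons a s ih => simp [ih, iot_add hm2]

lemma pihom_eq_zero_iff (hp2 : 2 ≤ p) (hm2 : 2 ≤ m) (y : ZMod (p * m)) :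
    pihom p m y = 0 ↔ p ∣ y.val := by
  haveI : NeZero p := ⟨by omega⟩
  haveI : NeZero (p * m) := ⟨by positivity⟩
  have hy : ((y.val : ℕ) : ZMod (p * m)) = y := by
    rw [ZMod.natCast_val, ZMod.cast_id]
  have h1 : pihom p m y = ((y.val : ℕ) : ZMod p) := by
    conv_lhs => rw [← hy]
    exact map_natCast (pihom p m) y.val
  rw [h1]
  exact ZMod.natCast_eq_zero_iff y.val p

lemma pi_iot (hp2 : 2 ≤ p) (hm2 : 2 ≤ m) (x : ZMod m) : pihom p m (iot p m x) = 0 := by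
  unfold iot
  rw [map_natCast, Nat.cast_mul, ZMod.natCast_self, zero_mul]

lemma iot_dvp (hp2 : 2 ≤ p) (hm2 : 2 ≤ m) {y : ZMod (p * m)} (h : pihom p m y = 0) :
    iot p m (dvp p m y) = y := by
  haveI : NeZero m := ⟨by omega⟩
  haveI : NeZero (p * m) := ⟨by positivity⟩
  obtain ⟨t, ht⟩ := (pihom_eq_zero_iff hp2 hm2 y).1 h
  unfold iot dvp
  rw [ZMod.val_natCast, modp_mul, ht, Nat.mul_div_cancel_left t (by omega : 0 < p), ← ht,
    ZMod.natCast_val, ZMod.cast_id]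

lemma iot_inj (hp2 : 2 ≤ p) (hm2 : 2 ≤ m) {x y : ZMod m}
    (h : iot p m x = iot p m y) : x = y := by
  haveI : NeZero m := ⟨by omega⟩
  unfold iot at h
  have h1 : p * x.val ≡ p * y.val [MOD p * m] := (ZMod.natCast_eq_natCast_iff _ _ _).1 h
  have h2 : x.val ≡ y.val [MOD m] := Nat.ModEq.mul_left_cancel' (by omega) h1
  have h3 : x.val % m = y.val % m := h2
  rw [Nat.mod_eq_of_lt (ZMod.val_lt x), Nat.mod_eq_of_lt (ZMod.val_lt y)] at h3
  have h4 : ((x.val : ℕ) : ZMod m) = ((y.val : ℕ) : ZMod m) := by rw [h3]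
  rwa [ZMod.natCast_val, ZMod.cast_id, ZMod.natCast_val, ZMod.cast_id] at h4

lemma iot_bval (hp2 : 2 ≤ p) (hm2 : 2 ≤ m) {B : Multiset (ZMod (p * m))}
    (h : IsBlk p m B) : iot p m (bval p m B) = B.sum :=
  iot_dvp hp2 hm2 h.2

lemma blocks_card (Bs : Multiset (Multiset (ZMod (p * m))))
    (h : ∀ B ∈ Bs, IsBlk p m B) : Multiset.card Bs.sum = Multiset.card Bs * p := by
  rw [card_msum]
  have h2 : Bs.map Multiset.card = Multiset.replicate (Multiset.card Bs) p := by
    rw [Multiset.eq_replicate]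
    refine ⟨by simp, ?_⟩
    intro b hb
    obtain ⟨B, hB, rfl⟩ := Multiset.mem_map.1 hb
    exact (h B hB).1
  rw [h2, Multiset.sum_replicate, smul_eq_mul]

lemma extract (hp2 : 2 ≤ p) : ∀ (j : ℕ) (R : Multiset (ZMod (p * m))),
    j * p + (p - 1) ≤ Multiset.card R →
    ∃ Bs, Multiset.card Bs = j ∧ (∀ B ∈ Bs, IsBlk p m B) ∧ Bs.sum ≤ R := by
  intro j
  induction j with
  | zero => exact fun R _ => ⟨0, rfl, by simp, Multiset.zero_le _⟩
  | succ j ih =>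
    intro R h
    have hmul : (j + 1) * p = j * p + p := by ring
    have hR : 2 * p - 1 ≤ Multiset.card (R.map (pihom p m)) := by
      rw [Multiset.card_map]
      omega
    obtain ⟨t, ht, htc, hts⟩ := ZMod.erdos_ginzburg_ziv_multiset (R.map (pihom p m)) hR
    obtain ⟨B, hBR, hBt⟩ := lift_le_map ht
    have hBcard : Multiset.card B = p := by
      rw [← Multiset.card_map (⇑(pihom p m)) B, hBt]; exact htc
    have hBsum : pihom p m B.sum = 0 := by
      rw [map_multiset_sum, hBt, hts]
    have hle : j * p + (p - 1) ≤ Multiset.card (R - B) := by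
      rw [Multiset.card_sub hBR]
      omega
    obtain ⟨Bs, hBsc, hBsb, hBsle⟩ := ih (R - B) hle
    refine ⟨B ::ₘ Bs, by simp [hBsc], ?_, ?_⟩
    · intro B' hB'
      rcases Multiset.mem_cons.1 hB' with rfl | hB'
      · exact ⟨hBcard, hBsum⟩
      · exact hBsb _ hB'
    · rw [Multiset.sum_cons]
      calc B + Bs.sum ≤ B + (R - B) := add_le_add_right hBsle B
        _ = R := by rw [add_comm]; exact tsub_add_cancel_of_le hBR

lemma forced (hp2 : 2 ≤ p) (hm2 : 2 ≤ m) {S : Multiset (ZMod (p * m))}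
    (hcard : Multiset.card S = 2 * (p * m) - 2) (X : Multiset (ZMod (p * m)))
    (hX : X ≤ S) (hXc : Multiset.card X ≤ p - 1) :
    ∃ Bs rem, IsDecomp p m S Bs rem ∧ X ≤ rem ∧ Multiset.card rem = 2 * p - 2 := by
  have hsub : (2 * m - 2) * p = 2 * m * p - 2 * p := Nat.sub_mul _ _ _
  have hcomm : 2 * m * p = 2 * (p * m) := by ring
  have hpm : p * 2 ≤ p * m := Nat.mul_le_mul_left p hm2
  have hle : (2 * m - 2) * p + (p - 1) ≤ Multiset.card (S - X) := by
    rw [Multiset.card_sub hX, hcard]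
    omega
  obtain ⟨Bs, hc, hb, hle2⟩ := extract hp2 (2 * m - 2) (S - X) hle
  have hBsS : Bs.sum + X ≤ S := by
    have h2 := add_le_add_left hle2 X
    rwa [tsub_add_cancel_of_le hX] at h2
  have hBsle : Bs.sum ≤ S := le_trans (le_add_right _ _) hBsS
  have hcardBs : Multiset.card Bs.sum = (2 * m - 2) * p := by
    rw [blocks_card Bs hb, hc]
  refine ⟨Bs, S - Bs.sum, ⟨?_, hc, hb⟩, ?_, ?_⟩
  · rw [add_comm]
    exact (tsub_add_cancel_of_le hBsle).symm
  · exact le_tsub_of_add_le_right (by rwa [add_comm] at hBsS)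
  · rw [Multiset.card_sub hBsle, hcard, hcardBs]
    omega

lemma rem_le {S : Multiset (ZMod (p * m))} {Bs rem} (hD : IsDecomp p m S Bs rem) :
    rem ≤ S := by
  rw [hD.1]
  exact le_add_left _ _

lemma sum_dvd_of_dvd (q : ℕ) (L : Multiset ℕ) (h : ∀ x ∈ L, q ∣ x) : q ∣ L.sum :=
  Multiset.dvd_sum h

lemma liftzero (hp2 : 2 ≤ p) (hm2 : 2 ≤ m) {S : Multiset (ZMod (p * m))}
    (hNo : NoZS (p * m) S) {Cs : Multiset (Multiset (ZMod (p * m)))}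
    (hCs : ∀ B ∈ Cs, IsBlk p m B) (hc : Multiset.card Cs = m)
    (hsum0 : (Cs.map (bval p m)).sum = 0) (hle : Cs.sum ≤ S) : False := by
  have hcard : Multiset.card Cs.sum = p * m := by
    rw [blocks_card Cs hCs, hc, mul_comm]
  have hsum : Cs.sum.sum = 0 := by
    rw [sum_msum]
    have h2 : Cs.map Multiset.sum = (Cs.map (bval p m)).map (iot p m) := by
      rw [Multiset.map_map]
      exact Multiset.map_congr rfl fun B hB => (iot_bval hp2 hm2 (hCs B hB)).symm
    rw [h2, iot_sum hm2, hsum0, iot_zero hm2]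
  exact hNo Cs.sum hle hcard hsum

lemma bvals_good (hp2 : 2 ≤ p) (hm2 : 2 ≤ m) (IHm : P m) {S : Multiset (ZMod (p * m))}
    {Bs rem} (hNo : NoZS (p * m) S) (hD : IsDecomp p m S Bs rem) :
    Good m (Bs.map (bval p m)) := by
  obtain ⟨hSeq, hc, hb⟩ := hD
  apply IHm
  · rw [Multiset.card_map, hc]
  · intro t ht htc hts
    obtain ⟨Cs, hCs, hCst⟩ := lift_le_map ht
    refine liftzero hp2 hm2 hNo (fun B hB => hb B (Multiset.mem_of_le hCs hB)) ?_ ?_ ?_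
    · rw [← Multiset.card_map (bval p m) Cs, hCst]; exact htc
    · rw [hCst, hts]
    · calc Cs.sum ≤ Bs.sum := msum_le_msum hCs
        _ ≤ S := by rw [hSeq]; exact le_add_right _ _

lemma rem_good (hp2 : 2 ≤ p) (hm2 : 2 ≤ m) (IHp : P p) {S : Multiset (ZMod (p * m))}
    {Bs rem} (hNo : NoZS (p * m) S) (hD : IsDecomp p m S Bs rem)
    (hrc : Multiset.card rem = 2 * p - 2) :
    Good p (rem.map (pihom p m)) := by
  apply IHp
  · rw [Multiset.card_map, hrc]
  · intro t ht htc hts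
    obtain ⟨C, hCrem, hCt⟩ := lift_le_map ht
    have hCblk : IsBlk p m C :=
      ⟨by rw [← Multiset.card_map (⇑(pihom p m)) C, hCt]; exact htc,
       by rw [map_multiset_sum, hCt, hts]⟩
    obtain ⟨hSeq, hc, hb⟩ := hD
    have hcard' : 2 * m - 1 ≤ Multiset.card ((C ::ₘ Bs).map (bval p m)) := by
      rw [Multiset.card_map, Multiset.card_cons, hc]
      omega
    obtain ⟨t', ht', htc', hts'⟩ := ZMod.erdos_ginzburg_ziv_multiset _ hcard'
    obtain ⟨Cs, hCs, hCst⟩ := lift_le_map ht'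
    refine liftzero hp2 hm2 hNo (Cs := Cs) (fun B hB => ?_) ?_ ?_ ?_
    · rcases Multiset.mem_cons.1 (Multiset.mem_of_le hCs hB) with rfl | h
      · exact hCblk
      · exact hb _ h
    · rw [← Multiset.card_map (bval p m) Cs, hCst]; exact htc' 
    · rw [hCst, hts']
    · calc Cs.sum ≤ (C ::ₘ Bs).sum := msum_le_msum hCs
        _ = C + Bs.sum := Multiset.sum_cons _ _
        _ ≤ rem + Bs.sum := add_le_add_left hCrem _
        _ = S := by rw [hSeq, add_comm]

lemma swap_eq (hp2 : 2 ≤ p) (hm2 : 2 ≤ m) (IHm : P m) {S : Multiset (ZMod (p * m))}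
    {Bs rem} (hNo : NoZS (p * m) S) (hD : IsDecomp p m S Bs rem)
    {B : Multiset (ZMod (p * m))} {w r : ZMod (p * m)} (hB : B ∈ Bs) (hw : w ∈ B)
    (hr : r ∈ rem) (hπ : pihom p m w = pihom p m r) : w = r := by
  obtain ⟨hSeq, hc, hb⟩ := hD
  have e1 : Bs.sum = B + (Bs.erase B).sum := by
    rw [← Multiset.sum_cons, Multiset.cons_erase hB]
  have e2 : B = w ::ₘ B.erase w := (Multiset.cons_erase hw).symm
  have e3 : rem = r ::ₘ rem.erase r := (Multiset.cons_erase hr).symm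
  set B' : Multiset (ZMod (p * m)) := r ::ₘ B.erase w with hB'
  set Bs' := B' ::ₘ Bs.erase B with hBs'
  set rem' := w ::ₘ rem.erase r with hrem'
  have hBcard : Multiset.card B = p := (hb B hB).1
  have hB'card : Multiset.card B' = p := by
    rw [hB', Multiset.card_cons, Multiset.card_erase_of_mem hw, hBcard]
    exact Nat.succ_pred_eq_of_pos (by omega)
  have hsB : B.sum = w + (B.erase w).sum := by
    conv_lhs => rw [e2]
    rw [Multiset.sum_cons]
  have hsB' : B'.sum = r + (B.erase w).sum := by
    rw [hB', Multiset.sum_cons]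
  have hB'blk : IsBlk p m B' := by
    refine ⟨hB'card, ?_⟩
    have h0 : pihom p m B.sum = 0 := (hb B hB).2
    rw [hsB, _root_.map_add] at h0
    rw [hsB', _root_.map_add, ← hπ]
    exact h0
  have hD' : IsDecomp p m S Bs' rem' := by
    refine ⟨?_, ?_, ?_⟩
    · have hBs'sum : Bs'.sum = B' + (Bs.erase B).sum := by rw [hBs', Multiset.sum_cons]
      refine Multiset.ext.2 fun x => ?_
      have h1 : Multiset.count x S =
          Multiset.count x B + Multiset.count x (Bs.erase B).sum + Multiset.count x rem := by
        rw [hSeq, e1]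
        simp [Multiset.count_add]
      have hcB : Multiset.count x B =
          Multiset.count x (B.erase w) + (if x = w then 1 else 0) := by
        conv_lhs => rw [e2]
        exact Multiset.count_cons x w (B.erase w)
      have hcR : Multiset.count x rem =
          Multiset.count x (rem.erase r) + (if x = r then 1 else 0) := by
        conv_lhs => rw [e3]
        exact Multiset.count_cons x r (rem.erase r)
      have h2 : Multiset.count x (Bs'.sum + rem') =
          (Multiset.count x (B.erase w) + (if x = r then 1 else 0))
          + Multiset.count x (Bs.erase B).sum
          + (Multiset.count x (rem.erase r) + (if x = w then 1 else 0)) := by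
        rw [Multiset.count_add, hBs'sum, Multiset.count_add, hB', hrem',
          Multiset.count_cons, Multiset.count_cons]
      rw [h1, h2, hcB, hcR]
      split_ifs <;> omega
    · rw [hBs', Multiset.card_cons, Multiset.card_erase_of_mem hB, hc]
      exact Nat.succ_pred_eq_of_pos (by omega)
    · intro B'' hB''
      rcases Multiset.mem_cons.1 hB'' with rfl | h
      · exact hB'blk
      · exact hb _ (Multiset.mem_of_le (Multiset.erase_le B Bs) h)
  have hGood1 := bvals_good hp2 hm2 IHm hNo ⟨hSeq, hc, hb⟩
  have hGood2 := bvals_good hp2 hm2 IHm hNo hD'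
  have hmap1 : Bs.map (bval p m) = bval p m B ::ₘ (Bs.erase B).map (bval p m) := by
    conv_lhs => rw [← Multiset.cons_erase hB]
    rw [Multiset.map_cons]
  have hmap2 : Bs'.map (bval p m) = bval p m B' ::ₘ (Bs.erase B).map (bval p m) := by
    rw [hBs', Multiset.map_cons]
  rw [hmap1] at hGood1
  rw [hmap2] at hGood2
  have heq := lemR hm2 hGood2 hGood1
  have hs1 : iot p m (bval p m B) = B.sum := iot_bval hp2 hm2 (hb B hB)
  have hs2 : iot p m (bval p m B') = B'.sum := iot_bval hp2 hm2 hB'blk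
  have hsum_eq : B'.sum = B.sum := by rw [← hs1, ← hs2, heq]
  rw [hsB, hsB'] at hsum_eq
  exact (add_right_cancel hsum_eq).symm

end Composite

section Composite2

variable {p m : ℕ}

lemma good_values {q : ℕ} (hq2 : 2 ≤ q) {M : Multiset (ZMod q)} (hG : Good q M) :
    ∃ a b : ZMod q, a ≠ b ∧ addOrderOf (b - a) = q ∧ (∀ x ∈ M, x = a ∨ x = b) ∧
      Multiset.count a M = q - 1 ∧ Multiset.count b M = q - 1 := by
  obtain ⟨g, e, he, hEq⟩ := hG
  have he0 : e ≠ 0 := fun h => by rw [h, addOrderOf_zero] at he; omega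
  have hne : g ≠ g + e := fun h => he0 (by linear_combination -h)
  refine ⟨g, g + e, hne, by rw [add_sub_cancel_left]; exact he, ?_, ?_, ?_⟩
  · intro x hx
    rw [hEq] at hx
    rcases Multiset.mem_add.1 hx with h | h
    · exact Or.inl (Multiset.eq_of_mem_replicate h)
    · exact Or.inr (Multiset.eq_of_mem_replicate h)
  · rw [hEq, Multiset.count_add, Multiset.count_replicate, Multiset.count_replicate]
    simp [hne, Ne.symm hne]
  · rw [hEq, Multiset.count_add, Multiset.count_replicate, Multiset.count_replicate]
    simp [hne, Ne.symm hne]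

/-- a three-valued decomposition for `ZMod 3` multisets -/
lemma threeval (M : Multiset (ZMod 3)) :
    M = Multiset.replicate (M.count 0) 0 + Multiset.replicate (M.count 1) 1 +
      Multiset.replicate (M.count 2) 2 := by
  have h01 : (0 : ZMod 3) ≠ 1 := by decide
  have h02 : (0 : ZMod 3) ≠ 2 := by decide
  have h12 : (1 : ZMod 3) ≠ 2 := by decide
  refine Multiset.ext.2 fun x => ?_
  have hx : x = 0 ∨ x = 1 ∨ x = 2 := by revert x; decide
  rcases hx with rfl | rfl | rfl <;>
    simp [Multiset.count_add, Multiset.count_replicate, h01, h02, h12, Ne.symm h01,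
      Ne.symm h02, Ne.symm h12]

/-- counts of a `ZMod 3`-block are congruent mod 3 -/
lemma block_cong3 {m : ℕ} {B : Multiset (ZMod (3 * m))}
    (hB : IsBlk 3 m B) (w w' : ZMod 3) :
    (Multiset.count w (B.map (pihom 3 m)) : ℤ) % 3 =
      (Multiset.count w' (B.map (pihom 3 m)) : ℤ) % 3 := by
  set M := B.map (pihom 3 m) with hM
  have hcard : M.count 0 + M.count 1 + M.count 2 = 3 := by
    have h := congrArg Multiset.card (threeval M)
    simp only [Multiset.card_add, Multiset.card_replicate] at h
    have h2 : Multiset.card M = 3 := by rw [hM, Multiset.card_map, hB.1]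
    omega
  have hsum : M.sum = 0 := by
    rw [hM, ← map_multiset_sum]
    exact hB.2
  have hs2 : ((M.count 1 + 2 * M.count 2 : ℕ) : ZMod 3) = 0 := by
    have h := congrArg Multiset.sum (threeval M)
    rw [hsum] at h
    simp only [Multiset.sum_add, Multiset.sum_replicate, smul_zero, zero_add] at h
    have h1 : (M.count 1) • (1 : ZMod 3) = ((M.count 1 : ℕ) : ZMod 3) := by
      rw [nsmul_eq_mul, mul_one]
    have h2 : (M.count 2) • (2 : ZMod 3) = ((2 * M.count 2 : ℕ) : ZMod 3) := by
      rw [nsmul_eq_mul]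
      push_cast
      ring
    rw [h1, h2] at h
    rw [Nat.cast_add, ← h]
  have hdvd : 3 ∣ M.count 1 + 2 * M.count 2 :=
    (ZMod.natCast_eq_zero_iff _ 3).1 hs2
  have hww : ∀ u : ZMod 3, M.count u % 3 = M.count 0 % 3 := by
    intro u
    have hu : u = 0 ∨ u = 1 ∨ u = 2 := by revert u; decide
    rcases hu with rfl | rfl | rfl <;> omega
  have h1 := hww w
  have h2 := hww w'
  omega

lemma blocks_cong3 {m : ℕ} (Bs : Multiset (Multiset (ZMod (3 * m))))
    (hb : ∀ B ∈ Bs, IsBlk 3 m B) (w w' : ZMod 3) :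
    (Multiset.count w (Bs.sum.map (pihom 3 m)) : ℤ) % 3 =
      (Multiset.count w' (Bs.sum.map (pihom 3 m)) : ℤ) % 3 := by
  induction Bs using Multiset.induction with
  | empty => simp
  | cons B Bs ih =>
    have hB := hb B (Multiset.mem_cons_self _ _)
    have hBs := ih fun B' hB' => hb B' (Multiset.mem_cons_of_mem hB')
    have hsum : (B ::ₘ Bs).sum = B + Bs.sum := Multiset.sum_cons _ _
    rw [hsum, Multiset.map_add, Multiset.count_add, Multiset.count_add]
    have := block_cong3 hB w w'
    push_cast
    omega

lemma two_classes (hp2 : 2 ≤ p) (hm2 : 2 ≤ m) (IHp : P p) (IHm : P m)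
    {S : Multiset (ZMod (p * m))} (hcard : Multiset.card S = 2 * (p * m) - 2)
    (hNo : NoZS (p * m) S) :
    ∃ c₁ c₂ : ZMod p, addOrderOf (c₂ - c₁) = p ∧
      ∀ s ∈ S, pihom p m s = c₁ ∨ pihom p m s = c₂ := by
  obtain ⟨Bs₀, rem₀, hD₀, _, hrc₀⟩ := forced hp2 hm2 hcard 0 (Multiset.zero_le S) (by simp)
  obtain ⟨c₁, c₂, hc12, hord, hvals₀, hcnt₁, hcnt₂⟩ :=
    good_values hp2 (rem_good hp2 hm2 IHp hNo hD₀ hrc₀)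
  refine ⟨c₁, c₂, hord, ?_⟩
  by_contra hbad
  push_neg at hbad
  obtain ⟨s₀, hs₀S, hs₀1, hs₀2⟩ := hbad
  have hrem₀S : rem₀ ≤ S := rem_le hD₀
  have hex : ∀ c : ZMod p, Multiset.count c (rem₀.map (pihom p m)) = p - 1 →
      ∃ s ∈ S, pihom p m s = c := by
    intro c hc
    have hmem : c ∈ rem₀.map (pihom p m) := by
      rw [← Multiset.count_pos, hc]; omega
    obtain ⟨s, hs, hπ⟩ := Multiset.mem_map.1 hmem
    exact ⟨s, Multiset.mem_of_le hrem₀S hs, hπ⟩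
  obtain ⟨s₁, hs₁S, hπ₁⟩ := hex c₁ hcnt₁
  obtain ⟨s₂, hs₂S, hπ₂⟩ := hex c₂ hcnt₂
  have hne01 : s₀ ≠ s₁ := fun h => hs₀1 (by rw [h, hπ₁])
  have hne02 : s₀ ≠ s₂ := fun h => hs₀2 (by rw [h, hπ₂])
  have hne12 : s₁ ≠ s₂ := fun h => hc12 (by rw [← hπ₁, h, hπ₂])
  rcases (show p = 2 ∨ p = 3 ∨ 4 ≤ p by omega) with rfl | rfl | h4
  · -- p = 2 : impossible to avoid both classes
    have hdec : ∀ x a b : ZMod 2, a ≠ b → x = a ∨ x = b := by decide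
    rcases hdec (pihom 2 m s₀) c₁ c₂ hc12 with h | h
    exacts [hs₀1 h, hs₀2 h]
  · -- p = 3 : counting contradiction
    have force2 : ∀ u ∈ S, ∀ v ∈ S, u ≠ v → pihom 3 m u ≠ pihom 3 m v →
        ∃ Bs rem, IsDecomp 3 m S Bs rem ∧
          Multiset.count (pihom 3 m u) (rem.map (pihom 3 m)) = 2 ∧
          Multiset.count (pihom 3 m v) (rem.map (pihom 3 m)) = 2 ∧
          ∀ w : ZMod 3, w ≠ pihom 3 m u → w ≠ pihom 3 m v →
            Multiset.count w (rem.map (pihom 3 m)) = 0 := by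
      intro u hu v hv huv hπuv
      obtain ⟨Bs, rem, hD, hXle, hrc⟩ :=
        forced hp2 hm2 hcard {u, v} (pair_le hu hv huv) (by simp)
      obtain ⟨a, b, hab, _, hvals, hca, hcb⟩ :=
        good_values hp2 (rem_good hp2 hm2 IHp hNo hD hrc)
      have hmu : pihom 3 m u ∈ rem.map (pihom 3 m) :=
        Multiset.mem_map_of_mem _ (Multiset.mem_of_le hXle (by simp))
      have hmv : pihom 3 m v ∈ rem.map (pihom 3 m) :=
        Multiset.mem_map_of_mem _ (Multiset.mem_of_le hXle (by simp))
      have hzero : ∀ w : ZMod 3, w ≠ pihom 3 m u → w ≠ pihom 3 m v →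
          Multiset.count w (rem.map (pihom 3 m)) = 0 := by
        intro w hw1 hw2
        rw [Multiset.count_eq_zero]
        intro hwmem
        rcases hvals _ hwmem with rfl | rfl
        · rcases hvals _ hmu with h | h
          · exact hw1 h.symm
          · rcases hvals _ hmv with h' | h'
            · exact hw2 h'.symm
            · exact hπuv (h.trans h'.symm)
        · rcases hvals _ hmu with h | h
          · rcases hvals _ hmv with h' | h'
            · exact hπuv (h.trans h'.symm)
            · exact hw2 h'.symm
          · exact hw1 h.symm
      rcases hvals _ hmu with hua | hub <;> rcases hvals _ hmv with hva | hvb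
      · exact absurd (hua.trans hva.symm) hπuv
      · exact ⟨Bs, rem, hD, by rw [hua]; exact hca, by rw [hvb]; exact hcb, hzero⟩
      · exact ⟨Bs, rem, hD, by rw [hub]; exact hcb, by rw [hva]; exact hca, hzero⟩
      · exact absurd (hub.trans hvb.symm) hπuv
    obtain ⟨BsA, remA, hDA, hAu, hAv, hAo⟩ :=
      force2 s₀ hs₀S s₁ hs₁S hne01 (by rw [hπ₁]; exact hs₀1)
    obtain ⟨BsB, remB, hDB, hBu, hBv, hBo⟩ :=
      force2 s₀ hs₀S s₂ hs₂S hne02 (by rw [hπ₂]; exact hs₀2)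
    rw [hπ₁] at hAv hAo
    rw [hπ₂] at hBv hBo
    have hAc₂ : Multiset.count c₂ (remA.map (pihom 3 m)) = 0 :=
      hAo c₂ (fun h => hs₀2 h.symm) (Ne.symm hc12)
    have hBc₁ : Multiset.count c₁ (remB.map (pihom 3 m)) = 0 :=
      hBo c₁ (fun h => hs₀1 h.symm) hc12
    have hSA : ∀ w : ZMod 3, Multiset.count w (S.map (pihom 3 m)) =
        Multiset.count w (BsA.sum.map (pihom 3 m)) +
          Multiset.count w (remA.map (pihom 3 m)) := by
      intro w
      rw [hDA.1, Multiset.map_add, Multiset.count_add]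
    have hSB : ∀ w : ZMod 3, Multiset.count w (S.map (pihom 3 m)) =
        Multiset.count w (BsB.sum.map (pihom 3 m)) +
          Multiset.count w (remB.map (pihom 3 m)) := by
      intro w
      rw [hDB.1, Multiset.map_add, Multiset.count_add]
    have e1 := hSA (pihom 3 m s₀)
    have e2 := hSA c₁
    have e3 := hSA c₂
    have f1 := hSB (pihom 3 m s₀)
    have f2 := hSB c₂
    have f3 := hSB c₁
    rw [hAu] at e1
    rw [hAv] at e2
    rw [hAc₂] at e3
    rw [hBu] at f1
    rw [hBv] at f2
    rw [hBc₁] at f3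
    have g1 := blocks_cong3 BsA hDA.2.2 (pihom 3 m s₀) c₁
    have g2 := blocks_cong3 BsA hDA.2.2 c₁ c₂
    have g3 := blocks_cong3 BsB hDB.2.2 (pihom 3 m s₀) c₂
    have g4 := blocks_cong3 BsB hDB.2.2 c₂ c₁
    omega
  · -- 4 ≤ p : force all three into a remainder
    obtain ⟨Bs, rem, hD, hXle, hrc⟩ := forced hp2 hm2 hcard {s₀, s₁, s₂}
      (triple_le hs₀S hs₁S hs₂S hne01 hne02 hne12) (by simp; omega)
    obtain ⟨a, b, hab, _, hvals, _, _⟩ :=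
      good_values hp2 (rem_good hp2 hm2 IHp hNo hD hrc)
    have hm0 : pihom p m s₀ = a ∨ pihom p m s₀ = b :=
      hvals _ (Multiset.mem_map_of_mem _ (Multiset.mem_of_le hXle (by simp)))
    have hm1 : pihom p m s₁ = a ∨ pihom p m s₁ = b :=
      hvals _ (Multiset.mem_map_of_mem _ (Multiset.mem_of_le hXle (by simp)))
    have hm2' : pihom p m s₂ = a ∨ pihom p m s₂ = b :=
      hvals _ (Multiset.mem_map_of_mem _ (Multiset.mem_of_le hXle (by simp)))
    have hππ1 : pihom p m s₀ ≠ pihom p m s₁ := by rw [hπ₁]; exact hs₀1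
    have hππ2 : pihom p m s₀ ≠ pihom p m s₂ := by rw [hπ₂]; exact hs₀2
    have hππ3 : pihom p m s₁ ≠ pihom p m s₂ := by rw [hπ₁, hπ₂]; exact hc12
    rcases hm0 with h0 | h0 <;> rcases hm1 with h1 | h1 <;> rcases hm2' with h2 | h2 <;>
      first
        | exact hππ1 (h0.trans h1.symm)
        | exact hππ2 (h0.trans h2.symm)
        | exact hππ3 (h1.trans h2.symm)

end Composite2

section Composite3

variable {p m : ℕ}

lemma const_class (hp2 : 2 ≤ p) (hm2 : 2 ≤ m) (IHp : P p) (IHm : P m)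
    {S : Multiset (ZMod (p * m))} (hcard : Multiset.card S = 2 * (p * m) - 2)
    (hNo : NoZS (p * m) S) {c : ZMod p}
    (hcnt : p ≤ Multiset.count c (S.map (pihom p m))) :
    ∀ s ∈ S, pihom p m s = c → ∀ t ∈ S, pihom p m t = c → s = t := by
  intro s hs hπs t ht hπt
  obtain ⟨Bs, rem, hD, hXle, hrc⟩ :=
    forced hp2 hm2 hcard {s} (Multiset.singleton_le.2 hs) (by simp; omega)
  have hs_rem : s ∈ rem := Multiset.mem_of_le hXle (Multiset.mem_singleton_self s)
  obtain ⟨a, b, hab, _, hvals, hca, hcb⟩ :=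
    good_values hp2 (rem_good hp2 hm2 IHp hNo hD hrc)
  have hc_mem : c = a ∨ c = b := by
    have : pihom p m s ∈ rem.map (pihom p m) := Multiset.mem_map_of_mem _ hs_rem
    rw [hπs] at this
    exact hvals _ this
  have hcount_rem : Multiset.count c (rem.map (pihom p m)) = p - 1 := by
    rcases hc_mem with rfl | rfl
    exacts [hca, hcb]
  have hSmap : Multiset.count c (S.map (pihom p m)) =
      Multiset.count c (Bs.sum.map (pihom p m)) + Multiset.count c (rem.map (pihom p m)) := by
    rw [hD.1, Multiset.map_add, Multiset.count_add]
  have hcount_blocks : 1 ≤ Multiset.count c (Bs.sum.map (pihom p m)) := by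
    rw [hSmap, hcount_rem] at hcnt
    omega
  have hcmem : c ∈ Bs.sum.map (pihom p m) := by
    rw [← Multiset.count_pos]
    omega
  obtain ⟨w, hwmem, hwπ⟩ := Multiset.mem_map.1 hcmem
  obtain ⟨B, hB, hwB⟩ := mem_msum.1 hwmem
  have hswap : ∀ r ∈ rem, pihom p m r = c → r = w := by
    intro r hr hrc'
    exact (swap_eq hp2 hm2 IHm hNo hD hB hwB hr (by rw [hwπ, hrc'])).symm
  have htloc : t ∈ Bs.sum ∨ t ∈ rem := by
    have := ht
    rw [hD.1] at this
    exact Multiset.mem_add.1 this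
  rcases htloc with hbt | hrt
  · obtain ⟨Bt, hBt, htBt⟩ := mem_msum.1 hbt
    exact (swap_eq hp2 hm2 IHm hNo hD hBt htBt hs_rem (by rw [hπt, hπs])).symm
  · rw [hswap s hs_rem hπs, hswap t hrt hπt]

lemma composite_case (hp2 : 2 ≤ p) (hm2 : 2 ≤ m) (IHp : P p) (IHm : P m) :
    P (p * m) := by
  intro S hcard hNo
  haveI : NeZero p := ⟨by omega⟩
  haveI : NeZero (p * m) := ⟨by positivity⟩
  have hpm2 : p * 2 ≤ p * m := Nat.mul_le_mul_left p hm2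
  obtain ⟨c₁, c₂, hord, hdich⟩ := two_classes hp2 hm2 IHp IHm hcard hNo
  have hc12 : c₁ ≠ c₂ := by
    intro h
    rw [h, sub_self, addOrderOf_zero] at hord
    omega
  -- no value can appear p*m times
  have hnorep : ∀ v : ZMod (p * m), Multiset.count v S ≤ p * m - 1 := by
    intro v
    by_contra hcon
    push_neg at hcon
    have hrep : Multiset.replicate (p * m) v ≤ S :=
      Multiset.le_count_iff_replicate_le.1 (by omega)
    refine hNo _ hrep (by rw [Multiset.card_replicate]) ?_
    rw [Multiset.sum_replicate, nsmul_eq_mul, ZMod.natCast_self, zero_mul]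
  -- dichotomy for S.map
  have hdichm : ∀ x ∈ S.map (pihom p m), x = c₁ ∨ x = c₂ := by
    intro x hx
    obtain ⟨sx, hsx, rfl⟩ := Multiset.mem_map.1 hx
    exact hdich sx hsx
  have hAsum : Multiset.count c₁ (S.map (pihom p m)) +
      Multiset.count c₂ (S.map (pihom p m)) = 2 * (p * m) - 2 := by
    have h := congrArg Multiset.card (twoval hc12 hdichm)
    simp only [Multiset.card_add, Multiset.card_replicate, Multiset.card_map] at h
    rw [hcard] at h
    omega
  -- base decomposition
  obtain ⟨Bs, rem, hD, _, hrc⟩ := forced hp2 hm2 hcard 0 (Multiset.zero_le S) (by simp)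
  obtain ⟨a, b, hab, hordab, hvals, hca, hcb⟩ :=
    good_values hp2 (rem_good hp2 hm2 IHp hNo hD hrc)
  -- values of rem are exactly {c₁, c₂}
  have hex : ∀ x : ZMod p, Multiset.count x (rem.map (pihom p m)) = p - 1 →
      x = c₁ ∨ x = c₂ := by
    intro x hx
    have hmem : x ∈ rem.map (pihom p m) := by rw [← Multiset.count_pos, hx]; omega
    obtain ⟨sx, hsx, rfl⟩ := Multiset.mem_map.1 hmem
    exact hdich sx (Multiset.mem_of_le (rem_le hD) hsx)
  have hvv : (a = c₁ ∧ b = c₂) ∨ (a = c₂ ∧ b = c₁) := by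
    rcases hex a hca with h1 | h1 <;> rcases hex b hcb with h2 | h2
    · exact absurd (h1.trans h2.symm) hab
    · exact Or.inl ⟨h1, h2⟩
    · exact Or.inr ⟨h1, h2⟩
    · exact absurd (h1.trans h2.symm) hab
  have hremc : ∀ c : ZMod p, c = c₁ ∨ c = c₂ →
      Multiset.count c (rem.map (pihom p m)) = p - 1 := by
    intro c hc
    rcases hvv with ⟨rfl, rfl⟩ | ⟨rfl, rfl⟩ <;> rcases hc with rfl | rfl <;>
      first | exact hca | exact hcb
  -- blocks are monochromatic: p ∣ class counts of blocks
  have hmono : ∀ c : ZMod p, c = c₁ ∨ c = c₂ →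
      p ∣ Multiset.count c (Bs.sum.map (pihom p m)) := by
    intro c hc
    rw [map_msum, count_msum, Multiset.map_map]
    apply Multiset.dvd_sum
    intro x hx
    obtain ⟨B, hB, rfl⟩ := Multiset.mem_map.1 hx
    simp only [Function.comp_apply]
    -- per block
    have hBblk := hD.2.2 B hB
    have hmemB : ∀ y ∈ B.map (pihom p m), y = c₁ ∨ y = c₂ := by
      intro y hy
      obtain ⟨by_, hby, rfl⟩ := Multiset.mem_map.1 hy
      have : by_ ∈ S := by
        rw [hD.1]
        exact Multiset.mem_add.2 (Or.inl (mem_msum.2 ⟨B, hB, hby⟩))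
      exact hdich by_ this
    have htv := twoval hc12 hmemB
    set k1 := Multiset.count c₁ (B.map (pihom p m)) with hk1
    set k2 := Multiset.count c₂ (B.map (pihom p m)) with hk2
    have hcardB : k1 + k2 = p := by
      have h := congrArg Multiset.card htv
      simp only [Multiset.card_add, Multiset.card_replicate] at h
      rw [Multiset.card_map, hBblk.1] at h
      omega
    have hsum0 : (B.map (pihom p m)).sum = 0 := by
      rw [← map_multiset_sum]
      exact hBblk.2
    rw [htv] at hsum0
    rw [Multiset.sum_add, Multiset.sum_replicate, Multiset.sum_replicate] at hsum0
    have hp0 : (p : ℕ) • c₁ = 0 := by rw [nsmul_eq_mul, ZMod.natCast_self, zero_mul]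
    have hkey : k2 • (c₂ - c₁) = 0 := by
      have expand : k2 • (c₂ - c₁) = (k1 • c₁ + k2 • c₂) - (k1 + k2) • c₁ := by
        rw [smul_sub, add_nsmul]
        abel
      rw [expand, hsum0, hcardB, hp0, zero_sub, neg_zero]
    have hdvd2 : p ∣ k2 := by
      rw [← hord]
      exact addOrderOf_dvd_of_nsmul_eq_zero hkey
    have hk2cases : k2 = 0 ∨ k2 = p := by
      rcases hdvd2 with ⟨d, hd⟩
      rcases Nat.eq_zero_or_pos d with rfl | hdpos
      · omega
      · have : p * 1 ≤ p * d := Nat.mul_le_mul_left p hdpos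
        omega
    rcases hc with rfl | rfl
    · rcases hk2cases with h | h
      · exact ⟨1, by omega⟩
      · exact ⟨0, by omega⟩
    · rcases hk2cases with h | h
      · exact ⟨0, by omega⟩
      · exact ⟨1, by omega⟩
  -- class counts: either p-1 or ≥ 2p-1
  have hclasscnt : ∀ c : ZMod p, c = c₁ ∨ c = c₂ →
      Multiset.count c (S.map (pihom p m)) = p - 1 ∨
        2 * p - 1 ≤ Multiset.count c (S.map (pihom p m)) := by
    intro c hc
    have hsplit : Multiset.count c (S.map (pihom p m)) =
        Multiset.count c (Bs.sum.map (pihom p m)) + (p - 1) := by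
      rw [hD.1, Multiset.map_add, Multiset.count_add, hremc c hc]
    rcases Nat.eq_zero_or_pos (Multiset.count c (Bs.sum.map (pihom p m))) with h0 | h0
    · left; omega
    · right
      have := Nat.le_of_dvd h0 (hmono c hc)
      omega
  -- constancy of a big class, yielding a replicate
  have hconst : ∀ c : ZMod p, c = c₁ ∨ c = c₂ →
      p ≤ Multiset.count c (S.map (pihom p m)) →
      ∃ v, v ∈ S ∧ pihom p m v = c ∧
        Multiset.replicate (Multiset.count c (S.map (pihom p m))) v ≤ S := by
    intro c hc hpc
    have hcc := const_class hp2 hm2 IHp IHm hcard hNo hpc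
    have hpos : 0 < Multiset.count c (S.map (pihom p m)) := by omega
    obtain ⟨v, hvS, hvc⟩ := Multiset.mem_map.1 (Multiset.count_pos.1 hpos)
    refine ⟨v, hvS, hvc, ?_⟩
    have hfil : Multiset.filter (fun x => pihom p m x = c) S =
        Multiset.replicate (Multiset.count c (S.map (pihom p m))) v := by
      rw [Multiset.eq_replicate]
      constructor
      · rw [← Multiset.countP_eq_card_filter, Multiset.count_map,
          ← Multiset.countP_eq_card_filter]
        apply Multiset.countP_congr rfl
        intro x _
        exact propext eq_comm
      · intro x hx
        rw [Multiset.mem_filter] at hx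
        exact hcc x hx.1 hx.2 v hvS hvc
    rw [← hfil]
    exact Multiset.filter_le _ S
  -- class counts cannot be p-1
  have hnotsmall : ∀ c c' : ZMod p, (c = c₁ ∧ c' = c₂) ∨ (c = c₂ ∧ c' = c₁) →
      Multiset.count c (S.map (pihom p m)) ≠ p - 1 := by
    rintro c c' hcc' hcount
    have hsum2 : Multiset.count c (S.map (pihom p m)) +
        Multiset.count c' (S.map (pihom p m)) = 2 * (p * m) - 2 := by
      rcases hcc' with ⟨rfl, rfl⟩ | ⟨rfl, rfl⟩
      · exact hAsum
      · rw [add_comm]; exact hAsum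
    have hbig : p * m ≤ Multiset.count c' (S.map (pihom p m)) := by omega
    obtain ⟨v, hvS, hvc, hrep⟩ := hconst c'
      (by rcases hcc' with ⟨_, rfl⟩ | ⟨_, rfl⟩; exacts [Or.inr rfl, Or.inl rfl])
      (by omega)
    have : Multiset.replicate (p * m) v ≤ S := by
      refine le_trans ?_ hrep
      rw [Multiset.replicate_le_replicate]
      omega
    refine hNo _ this (by rw [Multiset.card_replicate]) ?_
    rw [Multiset.sum_replicate, nsmul_eq_mul, ZMod.natCast_self, zero_mul]
  have hA1big : 2 * p - 1 ≤ Multiset.count c₁ (S.map (pihom p m)) := by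
    rcases hclasscnt c₁ (Or.inl rfl) with h | h
    · exact absurd h (hnotsmall c₁ c₂ (Or.inl ⟨rfl, rfl⟩))
    · exact h
  have hA2big : 2 * p - 1 ≤ Multiset.count c₂ (S.map (pihom p m)) := by
    rcases hclasscnt c₂ (Or.inr rfl) with h | h
    · exact absurd h (hnotsmall c₂ c₁ (Or.inr ⟨rfl, rfl⟩))
    · exact h
  obtain ⟨v₁, hv₁S, hv₁c, _⟩ := hconst c₁ (Or.inl rfl) (by omega)
  obtain ⟨v₂, hv₂S, hv₂c, _⟩ := hconst c₂ (Or.inr rfl) (by omega)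
  have hv12 : v₁ ≠ v₂ := fun h => hc12 (by rw [← hv₁c, ← hv₂c, h])
  have hcc₁ := const_class hp2 hm2 IHp IHm hcard hNo (c := c₁) (by omega)
  have hcc₂ := const_class hp2 hm2 IHp IHm hcard hNo (c := c₂) (by omega)
  have hSvals : ∀ x ∈ S, x = v₁ ∨ x = v₂ := by
    intro x hx
    rcases hdich x hx with h | h
    · exact Or.inl (hcc₁ x hx h v₁ hv₁S hv₁c)
    · exact Or.inr (hcc₂ x hx h v₂ hv₂S hv₂c)
  have hSdec := twoval hv12 hSvals
  set β₁ := Multiset.count v₁ S with hβ₁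
  set β₂ := Multiset.count v₂ S with hβ₂
  have hβsum : β₁ + β₂ = 2 * (p * m) - 2 := by
    have h := congrArg Multiset.card hSdec
    simp only [Multiset.card_add, Multiset.card_replicate] at h
    rw [hcard] at h
    omega
  have hβ₁le : β₁ ≤ p * m - 1 := hnorep v₁
  have hβ₂le : β₂ ≤ p * m - 1 := hnorep v₂
  have hβ₁eq : β₁ = p * m - 1 := by omega
  have hβ₂eq : β₂ = p * m - 1 := by omega
  -- the difference has full order
  have hkdvd : addOrderOf (v₂ - v₁) ∣ p * m :=
    addOrderOf_dvd_of_nsmul_eq_zero (by rw [nsmul_eq_mul, ZMod.natCast_self, zero_mul])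
  have hkpos : 0 < addOrderOf (v₂ - v₁) := addOrderOf_pos _
  have hkeq : addOrderOf (v₂ - v₁) = p * m := by
    by_contra hne
    set k := addOrderOf (v₂ - v₁) with hk
    have hklt : k ≤ p * m - 1 := by
      have := Nat.le_of_dvd (by positivity) hkdvd
      omega
    have hT : Multiset.replicate (p * m - k) v₁ + Multiset.replicate k v₂ ≤ S := by
      rw [hSdec, hβ₁eq, hβ₂eq]
      exact add_le_add ((Multiset.replicate_le_replicate v₁).2 (by omega))
        ((Multiset.replicate_le_replicate v₂).2 (by omega))
    refine hNo _ hT ?_ ?_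
    · rw [Multiset.card_add, Multiset.card_replicate, Multiset.card_replicate]
      omega
    · rw [Multiset.sum_add, Multiset.sum_replicate, Multiset.sum_replicate]
      have h1 : k • (v₂ - v₁) = 0 := addOrderOf_nsmul_eq_zero _
      have h3 : (p * m - k) + k = p * m := Nat.sub_add_cancel (by omega)
      have hgen : ∀ (a bn : ℕ) (x y : ZMod (p * m)),
          a • x + bn • y = (a + bn) • x + bn • (y - x) := by
        intro a bn x y
        rw [smul_sub, add_nsmul]
        abel
      rw [hgen (p * m - k) k v₁ v₂, h3, h1, add_zero, nsmul_eq_mul,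
        ZMod.natCast_self, zero_mul]
  refine ⟨v₁, v₂ - v₁, hkeq, ?_⟩
  rw [hSdec, hβ₁eq, hβ₂eq, add_sub_cancel]

end Composite3

section Pairing

variable {α : Type*} [DecidableEq α]

lemma three_count_le {a b c : α} (M : Multiset α) (hab : a ≠ b) (hac : a ≠ c) (hbc : b ≠ c) :
    M.count a + M.count b + M.count c ≤ Multiset.card M := by
  have hrep : Multiset.replicate (M.count a) a + Multiset.replicate (M.count b) b
      + Multiset.replicate (M.count c) c ≤ M := by
    rw [Multiset.le_iff_count]
    intro y
    rw [Multiset.count_add, Multiset.count_add, Multiset.count_replicate,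
      Multiset.count_replicate, Multiset.count_replicate]
    by_cases h1 : y = a
    · subst h1
      rw [if_pos rfl, if_neg (fun h : b = y => hab h.symm), if_neg (fun h : c = y => hac h.symm)]
      omega
    · by_cases h2 : y = b
      · subst h2
        rw [if_pos rfl, if_neg (fun h : a = y => h1 h.symm), if_neg (fun h : c = y => hbc h.symm)]
        omega
      · by_cases h3 : y = c
        · subst h3
          rw [if_pos rfl, if_neg (fun h : a = y => h1 h.symm), if_neg (fun h : b = y => h2 h.symm)]
          omega
        · rw [if_neg (fun h : a = y => h1 h.symm), if_neg (fun h : b = y => h2 h.symm),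
            if_neg (fun h : c = y => h3 h.symm)]
          omega
  have hcards := Multiset.card_le_card hrep
  simpa using hcards

lemma pairing : ∀ (k : ℕ) (M : Multiset α), Multiset.card M = 2 * k →
    (∀ a, M.count a ≤ k) →
    ∃ l : List (α × α), l.length = k ∧ (∀ pr ∈ l, pr.1 ≠ pr.2) ∧
      (l.map (fun pr => ({pr.1, pr.2} : Multiset α))).sum = M := by
  intro k
  induction k with
  | zero =>
    intro M hM _
    have hM0 : M = 0 := Multiset.card_eq_zero.1 (by simpa using hM)
    exact ⟨[], rfl, by simp, by simp [hM0]⟩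
  | succ k ih =>
    intro M hM hμ
    have hMne : M ≠ 0 := by
      intro h
      rw [h] at hM
      simp at hM
    obtain ⟨a, haT, hamax⟩ := Finset.exists_max_image M.toFinset (fun x => M.count x)
      (Multiset.toFinset_nonempty.2 hMne)
    have haM : a ∈ M := Multiset.mem_toFinset.1 haT
    have hbex : ∃ b ∈ M, b ≠ a := by
      by_contra hcon
      push_neg at hcon
      have hrep : M = Multiset.replicate (Multiset.card M) a := by
        rw [Multiset.eq_replicate]
        exact ⟨rfl, hcon⟩
      have hc := hμ a
      rw [hrep, Multiset.count_replicate, if_pos rfl] at hc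
      omega
    set M' := M.filter (fun x => x ≠ a) with hM'
    have hM'ne : M'.toFinset.Nonempty := by
      obtain ⟨b, hbM, hba⟩ := hbex
      exact ⟨b, Multiset.mem_toFinset.2 (Multiset.mem_filter.2 ⟨hbM, hba⟩)⟩
    obtain ⟨b, hbT, hbmax⟩ := Finset.exists_max_image M'.toFinset (fun x => M'.count x) hM'ne
    have hbM' : b ∈ M' := Multiset.mem_toFinset.1 hbT
    have hbM : b ∈ M := (Multiset.mem_filter.1 hbM').1
    have hba : b ≠ a := (Multiset.mem_filter.1 hbM').2
    have hcntM' : ∀ x : α, x ≠ a → M'.count x = M.count x := by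
      intro x hx
      rw [hM', Multiset.count_filter, if_pos hx]
    set M'' := (M.erase a).erase b with hM''
    have hbea : b ∈ M.erase a := (Multiset.mem_erase_of_ne hba).2 hbM
    have hM''card : Multiset.card M'' = 2 * k := by
      rw [hM'', Multiset.card_erase_of_mem hbea, Multiset.card_erase_of_mem haM, hM]
      simp only [Nat.pred_eq_sub_one]
      omega
    have hcnt'' : ∀ x, M''.count x ≤ k := by
      intro x
      by_cases hxa : x = a
      · subst hxa
        rw [hM'', Multiset.count_erase_of_ne (Ne.symm hba), Multiset.count_erase_self]
        have := hμ x
        omega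
      · by_cases hxb : x = b
        · subst hxb
          rw [hM'', Multiset.count_erase_self, Multiset.count_erase_of_ne hxa]
          have := hμ x
          omega
        · rw [hM'', Multiset.count_erase_of_ne hxb, Multiset.count_erase_of_ne hxa]
          by_contra hcon
          push_neg at hcon
          have hxM : x ∈ M := by
            rw [← Multiset.count_pos]
            omega
          have h1 : M.count x ≤ M.count a := hamax x (Multiset.mem_toFinset.2 hxM)
          have hxM'mem : x ∈ M' := Multiset.mem_filter.2 ⟨hxM, hxa⟩
          have h2 : M'.count x ≤ M'.count b := hbmax x (Multiset.mem_toFinset.2 hxM'mem)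
          rw [hcntM' x hxa, hcntM' b hba] at h2
          have h3 := three_count_le M (Ne.symm hba) (fun h => hxa h.symm)
            (fun h => hxb h.symm)
          omega
    obtain ⟨l, hlen, hne, hsum⟩ := ih M'' hM''card hcnt''
    refine ⟨(a, b) :: l, by simp [hlen], ?_, ?_⟩
    · intro pr hpr
      rcases List.mem_cons.1 hpr with rfl | hpr
      · exact fun h => hba h.symm
      · exact hne pr hpr
    · rw [List.map_cons, List.sum_cons, hsum]
      have h1 : M = a ::ₘ M.erase a := (Multiset.cons_erase haM).symm
      have h2 : M.erase a = b ::ₘ M'' := (Multiset.cons_erase hbea).symm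
      conv_rhs => rw [h1, h2]
      simp only [Multiset.insert_eq_cons, Multiset.cons_add]
      rw [Multiset.singleton_add]

end Pairing

section PrimeCase

open Finset Pointwise

lemma pair3 {p : ℕ} {a b c e : ZMod p} (hab : a ≠ b) (hce : c ≠ e)
    (h : (({a, b} : Finset (ZMod p)) + {c, e}).card ≤ 3) :
    e - c = b - a ∨ e - c = a - b := by
  by_contra hcon
  push_neg at hcon
  obtain ⟨h1, h2⟩ := hcon
  have hsub : ({a + c, a + e, b + c, b + e} : Finset (ZMod p)) ⊆ ({a, b} : Finset (ZMod p)) + {c, e} := by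
    intro x hx
    simp only [Finset.mem_insert, Finset.mem_singleton] at hx
    rw [Finset.mem_add]
    rcases hx with rfl | rfl | rfl | rfl
    · exact ⟨a, by simp, c, by simp, rfl⟩
    · exact ⟨a, by simp, e, by simp, rfl⟩
    · exact ⟨b, by simp, c, by simp, rfl⟩
    · exact ⟨b, by simp, e, by simp, rfl⟩
  have ne1 : a + c ≠ a + e := fun h' => hce (by linear_combination h')
  have ne2 : a + c ≠ b + c := fun h' => hab (by linear_combination h')
  have ne3 : a + c ≠ b + e := fun h' => h2 (by linear_combination -h')
  have ne4 : a + e ≠ b + c := fun h' => h1 (by linear_combination h')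
  have ne5 : a + e ≠ b + e := fun h' => hab (by linear_combination h')
  have ne6 : b + c ≠ b + e := fun h' => hce (by linear_combination h')
  have hcard4 : ({a + c, a + e, b + c, b + e} : Finset (ZMod p)).card = 4 := by
    rw [Finset.card_insert_of_notMem (by
      simp only [Finset.mem_insert, Finset.mem_singleton]
      push_neg
      exact ⟨ne1, ne2, ne3⟩)]
    rw [Finset.card_insert_of_notMem (by
      simp only [Finset.mem_insert, Finset.mem_singleton]
      push_neg
      exact ⟨ne4, ne5⟩)]
    rw [Finset.card_insert_of_notMem (by
      simp only [Finset.mem_singleton]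
      exact ne6)]
    rw [Finset.card_singleton]
  have := Finset.card_le_card hsub
  omega

lemma prime_case {p : ℕ} (hp : p.Prime) (h5 : 5 ≤ p) : P p := by
  intro S hcard hNo
  haveI : Fact p.Prime := ⟨hp⟩
  haveI : NeZero p := ⟨hp.ne_zero⟩
  have hμ : ∀ a : ZMod p, S.count a ≤ p - 1 := by
    intro a
    by_contra hcon
    push_neg at hcon
    have hrep : Multiset.replicate p a ≤ S := Multiset.le_count_iff_replicate_le.1 (by omega)
    exact hNo _ hrep (by simp)
      (by rw [Multiset.sum_replicate, nsmul_eq_mul, ZMod.natCast_self, zero_mul])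
  obtain ⟨l, hlen, hnepair, hsum⟩ := pairing (p - 1) S (by rw [hcard]; omega)
    (fun a => hμ a)
  set L := l.length with hL
  have hLval : L = p - 1 := hlen
  set A : Fin L → Finset (ZMod p) := fun i => {(l.get i).1, (l.get i).2} with hA
  set pairMS : Fin L → Multiset (ZMod p) := fun i => {(l.get i).1, (l.get i).2} with hpairMS
  have hApair : ∀ i : Fin L, (l.get i).1 ≠ (l.get i).2 :=
    fun i => hnepair _ (List.get_mem l i)
  have hAcard : ∀ i, (A i).card = 2 := fun i => Finset.card_pair (hApair i)
  have hAne : ∀ i, (A i).Nonempty := fun i => ⟨_, Finset.mem_insert_self _ _⟩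
  have hTotal : ∑ i : Fin L, pairMS i = S := by
    have h1 : l.map (fun pr => ({pr.1, pr.2} : Multiset (ZMod p))) =
        List.ofFn (fun i => pairMS i) := by
      conv_lhs => rw [← List.ofFn_get l]
      rw [List.map_ofFn]
      rfl
    rw [← hsum, h1, List.sum_ofFn]
  -- selection realizability
  have hSEL : ∀ (J : Finset (Fin L)) (x : ZMod p), x ∈ ∑ i ∈ J, A i →
      ∃ T ≤ ∑ i ∈ J, pairMS i, Multiset.card T = J.card ∧ T.sum = x := by
    intro J
    induction J using Finset.induction_on with
    | empty =>
      intro x hx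
      rw [Finset.sum_empty, Finset.mem_zero] at hx
      exact ⟨0, le_rfl, by simp, by simp [hx]⟩
    | @insert j J' hj ih =>
      intro x hx
      rw [Finset.sum_insert hj, Finset.mem_add] at hx
      obtain ⟨y, hy, z, hz, rfl⟩ := hx
      obtain ⟨T, hT, hTc, hTs⟩ := ih z hz
      have hy' : y ∈ pairMS j := by
        rcases Finset.mem_insert.1 hy with rfl | hy2
        · exact Multiset.mem_cons_self _ _
        · rw [Finset.mem_singleton] at hy2
          subst hy2
          exact Multiset.mem_cons_of_mem (Multiset.mem_singleton_self _)
      refine ⟨y ::ₘ T, ?_, ?_, ?_⟩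
      · rw [Finset.sum_insert hj, ← Multiset.singleton_add]
        exact add_le_add (Multiset.singleton_le.2 hy') hT
      · rw [Multiset.card_cons, hTc, Finset.card_insert_of_notMem hj]
      · rw [Multiset.sum_cons, hTs]
  -- nonempty sums
  have hsumne : ∀ J : Finset (Fin L), (∑ i ∈ J, A i).Nonempty := by
    intro J
    induction J using Finset.induction_on with
    | empty =>
      rw [Finset.sum_empty]
      exact ⟨0, Finset.mem_zero.2 rfl⟩
    | @insert j J' hj ih =>
      rw [Finset.sum_insert hj]
      exact (hAne j).add ih
  -- iterated Cauchy-Davenport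
  have hCDIT : ∀ (J : Finset (Fin L)) (B : Finset (ZMod p)), B.Nonempty →
      min p (B.card + J.card) ≤ (B + ∑ i ∈ J, A i).card := by
    intro J
    induction J using Finset.induction_on with
    | empty =>
      intro B hB
      rw [Finset.sum_empty, add_zero, Finset.card_empty]
      simpa using min_le_right p B.card
    | @insert j J' hj ih =>
      intro B hB
      rw [Finset.sum_insert hj, ← add_assoc]
      have h1 := ZMod.cauchy_davenport hp hB (hAne j)
      have h2 := ih (B + A j) (hB.add (hAne j))
      have h3 : (B + A j).card ≤ ((B + A j) + ∑ i ∈ J', A i).card :=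
        Finset.card_le_card_add_right (hsumne J')
      rw [hAcard j] at h1
      rw [Finset.card_insert_of_notMem hj]
      omega
  have hSUMC : ∀ J : Finset (Fin L), min p (J.card + 1) ≤ (∑ i ∈ J, A i).card := by
    intro J
    rcases Finset.eq_empty_or_nonempty J with rfl | ⟨j, hj⟩
    · rw [Finset.sum_empty, Finset.card_empty]
      have h0 : (0 : Finset (ZMod p)).card = 1 := rfl
      rw [h0]
      have := hp.two_le
      omega
    · have hsum_eq : ∑ i ∈ J, A i = A j + ∑ i ∈ J.erase j, A i := by
        rw [← Finset.sum_insert (Finset.notMem_erase j J), Finset.insert_erase hj]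
      rw [hsum_eq]
      have h2 := hCDIT (J.erase j) (A j) (hAne j)
      rw [hAcard j] at h2
      have h3 : (J.erase j).card = J.card - 1 := Finset.card_erase_of_mem hj
      have h4 : 1 ≤ J.card := Finset.card_pos.2 ⟨j, hj⟩
      omega
  -- realization constraint
  have hreal : ∀ j : Fin L, ∀ y ∈ ∑ i ∈ Finset.univ.erase j, A i,
      (l.get j).1 + (l.get j).2 + y ≠ 0 := by
    intro j y hy h0
    obtain ⟨T, hT, hTc, hTs⟩ := hSEL _ y hy
    have hT' : (l.get j).1 ::ₘ (l.get j).2 ::ₘ T ≤ S := by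
      rw [← hTotal, ← Finset.sum_erase_add Finset.univ _ (Finset.mem_univ j)]
      have heq : T + pairMS j = (l.get j).1 ::ₘ (l.get j).2 ::ₘ T := by
        show T + ((l.get j).1 ::ₘ (l.get j).2 ::ₘ 0) = _
        rw [Multiset.add_cons, Multiset.add_cons, add_zero]
      calc (l.get j).1 ::ₘ (l.get j).2 ::ₘ T = T + pairMS j := heq.symm
        _ ≤ (∑ i ∈ Finset.univ.erase j, pairMS i) + pairMS j := add_le_add hT le_rfl
    refine hNo _ hT' ?_ ?_
    · rw [Multiset.card_cons, Multiset.card_cons, hTc,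
        Finset.card_erase_of_mem (Finset.mem_univ j), Finset.card_univ, Fintype.card_fin]
      omega
    · rw [Multiset.sum_cons, Multiset.sum_cons, hTs]
      linear_combination h0
  -- upper bound for the full erased sum
  have hupper : ∀ j : Fin L, (∑ i ∈ Finset.univ.erase j, A i).card ≤ p - 1 := by
    intro j
    by_contra hcon
    push_neg at hcon
    have h1 : (∑ i ∈ Finset.univ.erase j, A i).card ≤ p := by
      have h2 := Finset.card_le_univ (∑ i ∈ Finset.univ.erase j, A i)
      rwa [ZMod.card] at h2
    have hEuniv : (∑ i ∈ Finset.univ.erase j, A i) = Finset.univ :=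
      Finset.eq_univ_of_card _ (by rw [ZMod.card]; omega)
    have hmem : -((l.get j).1 + (l.get j).2) ∈ ∑ i ∈ Finset.univ.erase j, A i := by
      rw [hEuniv]
      exact Finset.mem_univ _
    exact hreal j _ hmem (by ring)
  -- exact cardinalities
  have hEXACT : ∀ (j : Fin L) (J : Finset (Fin L)), J ⊆ Finset.univ.erase j →
      (∑ i ∈ J, A i).card = J.card + 1 := by
    intro j J hJ
    have herase_card : (Finset.univ.erase j).card = p - 2 := by
      rw [Finset.card_erase_of_mem (Finset.mem_univ j), Finset.card_univ, Fintype.card_fin]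
      omega
    have hJcard : J.card ≤ p - 2 := by
      have h1 := Finset.card_le_card hJ
      omega
    have hlow := hSUMC J
    have hsplit : (∑ i ∈ Finset.univ.erase j, A i) =
        (∑ i ∈ J, A i) + ∑ i ∈ Finset.univ.erase j \ J, A i := by
      rw [add_comm, Finset.sum_sdiff hJ]
    have hup := hupper j
    rw [hsplit] at hup
    have hCDsp := hCDIT (Finset.univ.erase j \ J) (∑ i ∈ J, A i) (hsumne J)
    have hsd : (Finset.univ.erase j \ J).card = (p - 2) - J.card := by
      rw [Finset.card_sdiff_of_subset hJ, herase_card]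
    rw [hsd] at hCDsp
    omega
  -- common difference
  have hLpos : 0 < L := by omega
  set i0 : Fin L := ⟨0, hLpos⟩ with hi0
  set d : ZMod p := (l.get i0).2 - (l.get i0).1 with hd
  have hd0 : d ≠ 0 := sub_ne_zero.2 (Ne.symm (hApair i0))
  have hordd : addOrderOf d = p := ord_prime hp hd0
  have hpair3 : ∀ i : Fin L, i ≠ i0 → (A i0 + A i).card = 3 := by
    intro i hi
    have hex3 : ∃ j : Fin L, j ≠ i0 ∧ j ≠ i := by
      by_contra hcon
      push_neg at hcon
      have hsub2 : (Finset.univ : Finset (Fin L)) ⊆ {i0, i} := by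
        intro j _
        rcases eq_or_ne j i0 with rfl | hji
        · exact Finset.mem_insert_self _ _
        · exact Finset.mem_insert.2 (Or.inr (Finset.mem_singleton.2 (hcon j hji)))
      have hle := Finset.card_le_card hsub2
      have hc2 : ({i0, i} : Finset (Fin L)).card ≤ 2 :=
        le_trans (Finset.card_insert_le _ _) (by simp)
      rw [Finset.card_univ, Fintype.card_fin] at hle
      omega
    obtain ⟨j, hji0, hji⟩ := hex3
    have hsub : ({i0, i} : Finset (Fin L)) ⊆ Finset.univ.erase j := by
      intro x hx
      rcases Finset.mem_insert.1 hx with rfl | hx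
      · exact Finset.mem_erase.2 ⟨Ne.symm hji0, Finset.mem_univ _⟩
      · rw [Finset.mem_singleton] at hx
        subst hx
        exact Finset.mem_erase.2 ⟨Ne.symm hji, Finset.mem_univ _⟩
    have hE := hEXACT j _ hsub
    rw [Finset.sum_pair (Ne.symm hi)] at hE
    rw [Finset.card_pair (Ne.symm hi)] at hE
    exact hE
  -- normalize pairs
  set mm : Fin L → ZMod p := fun i =>
    if (l.get i).2 - (l.get i).1 = d then (l.get i).1 else (l.get i).2 with hmmdef
  have hAi : ∀ i : Fin L, A i = ({mm i, mm i + d} : Finset (ZMod p)) ∧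
      pairMS i = ({mm i, mm i + d} : Multiset (ZMod p)) ∧
      (l.get i).1 + (l.get i).2 = mm i + (mm i + d) := by
    intro i
    by_cases hcase : (l.get i).2 - (l.get i).1 = d
    · have hmmi : mm i = (l.get i).1 := by
        simp only [hmmdef]
        rw [if_pos hcase]
      have h2 : mm i + d = (l.get i).2 := by
        rw [hmmi]
        linear_combination -hcase
      refine ⟨?_, ?_, ?_⟩
      · simp only [hA]
        rw [h2, hmmi]
      · simp only [hpairMS]
        rw [h2, hmmi]
      · rw [h2, hmmi]
    · have hii0 : i ≠ i0 := by
        intro h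
        subst h
        exact hcase hd.symm
      have h3 := hpair3 i hii0
      have hdiff := pair3 (hApair i0) (hApair i) (by
        have : A i0 + A i = ({(l.get i0).1, (l.get i0).2} : Finset (ZMod p)) +
            {(l.get i).1, (l.get i).2} := by simp only [hA]
        rw [← this, h3])
      rcases hdiff with h | h
      · exact absurd (h.trans hd.symm) hcase
      · have hmmi : mm i = (l.get i).2 := by
          simp only [hmmdef]
          rw [if_neg hcase]
        have h2 : mm i + d = (l.get i).1 := by
          rw [hmmi]
          linear_combination h
        refine ⟨?_, ?_, ?_⟩
        · simp only [hA]
          rw [h2, hmmi]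
          exact Finset.pair_comm _ _
        · simp only [hpairMS]
          rw [h2, hmmi]
          exact Multiset.pair_comm _ _
        · rw [h2, hmmi]
          ring
  -- arithmetic progression structure
  have hAP : ∀ (J : Finset (Fin L)), ∑ i ∈ J, A i =
      Finset.image (fun k => (∑ i ∈ J, mm i) + k • d) (Finset.range (J.card + 1)) := by
    intro J
    induction J using Finset.induction_on with
    | empty =>
      rw [Finset.sum_empty, Finset.sum_empty, Finset.card_empty]
      ext x
      simp only [Finset.mem_zero, Finset.mem_image, Finset.mem_range]
      constructor
      · rintro rfl
        exact ⟨0, by omega, by simp⟩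
      · rintro ⟨k, hk, rfl⟩
        have hk0 : k = 0 := by omega
        subst hk0
        simp
    | @insert j J' hj ihJ =>
      rw [Finset.sum_insert hj, Finset.sum_insert hj, ihJ, (hAi j).1,
        Finset.card_insert_of_notMem hj]
      ext x
      simp only [Finset.mem_add, Finset.mem_image, Finset.mem_range, Finset.mem_insert,
        Finset.mem_singleton]
      constructor
      · rintro ⟨y, hy, z, ⟨k, hk, rfl⟩, rfl⟩
        rcases hy with rfl | rfl
        · exact ⟨k, by omega, by abel⟩
        · refine ⟨k + 1, by omega, ?_⟩
          rw [succ_nsmul]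
          abel
      · rintro ⟨k, hk, rfl⟩
        rcases Nat.lt_or_ge k (J'.card + 1) with hk2 | hk2
        · exact ⟨mm j, Or.inl rfl, _, ⟨k, hk2, rfl⟩, by abel⟩
        · have hk3 : k = J'.card + 1 := by omega
          refine ⟨mm j + d, Or.inr rfl, _, ⟨J'.card, by omega, rfl⟩, ?_⟩
          subst hk3
          rw [succ_nsmul]
          abel
  -- each mm j equals -M
  set Mtot : ZMod p := ∑ i : Fin L, mm i with hMtot
  have hmmval : ∀ j : Fin L, mm j = -Mtot := by
    intro j
    have herase_card : (Finset.univ.erase j).card = p - 2 := by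
      rw [Finset.card_erase_of_mem (Finset.mem_univ j), Finset.card_univ, Fintype.card_fin]
      omega
    have hkey : ∀ k1 k2 : ℕ, k1 ≤ k2 → k2 < p → k1 • d = k2 • d → k1 = k2 := by
      intro k1 k2 hle hlt heq
      have hsub : (k2 - k1) • d = 0 := by
        rw [sub_nsmul d hle, ← heq, add_neg_cancel]
      have hdvd : p ∣ k2 - k1 := hordd ▸ addOrderOf_dvd_of_nsmul_eq_zero hsub
      have := Nat.eq_zero_of_dvd_of_lt hdvd
      omega
    have himage : Finset.image (fun k => (∑ i ∈ Finset.univ.erase j, mm i) + k • d)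
        (Finset.range p) = Finset.univ := by
      apply Finset.eq_univ_of_card
      rw [Finset.card_image_of_injOn, Finset.card_range, ZMod.card]
      intro k1 hk1 k2 hk2 heq
      have h1 : k1 • d = k2 • d := by
        have := heq
        simp only at this
        exact add_left_cancel this
      rw [Finset.coe_range, Set.mem_Iio] at hk1 hk2
      rcases Nat.le_total k1 k2 with hle | hle
      · exact hkey k1 k2 hle hk2 h1
      · exact (hkey k2 k1 hle hk1 h1.symm).symm
    have hmem : -((l.get j).1 + (l.get j).2) ∈ Finset.image
        (fun k => (∑ i ∈ Finset.univ.erase j, mm i) + k • d) (Finset.range p) := by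
      rw [himage]
      exact Finset.mem_univ _
    obtain ⟨k, hkrange, hkeq⟩ := Finset.mem_image.1 hmem
    rw [Finset.mem_range] at hkrange
    have hknotsmall : ¬ k < p - 1 := by
      intro hk
      refine hreal j (-((l.get j).1 + (l.get j).2)) ?_ (by ring)
      rw [hAP (Finset.univ.erase j), herase_card]
      apply Finset.mem_image.2
      exact ⟨k, Finset.mem_range.2 (by omega), hkeq⟩
    have hkval : k = p - 1 := by omega
    have hpd : (p - 1) • d = -d := by
      have hp1 : (p - 1) • d + d = 0 := by
        rw [← succ_nsmul]
        have hsucc : (p - 1) + 1 = p := by omega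
        rw [hsucc, nsmul_eq_mul, ZMod.natCast_self, zero_mul]
      exact eq_neg_of_add_eq_zero_left hp1
    rw [hkval, hpd] at hkeq
    have hsumj := (hAi j).2.2
    rw [hsumj] at hkeq
    have hCj : (∑ i ∈ Finset.univ.erase j, mm i) + mm j = Mtot :=
      Finset.sum_erase_add _ _ (Finset.mem_univ j)
    linear_combination hkeq - hCj
  -- reconstruct S
  have hgood : S = Multiset.replicate (p - 1) (-Mtot) +
      Multiset.replicate (p - 1) (-Mtot + d) := by
    rw [← hTotal]
    have hpairs : ∀ i : Fin L, pairMS i = ({-Mtot, -Mtot + d} : Multiset (ZMod p)) := by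
      intro i
      rw [(hAi i).2.1, hmmval i]
    rw [Finset.sum_congr rfl (fun i _ => hpairs i), Finset.sum_const, Finset.card_univ,
      Fintype.card_fin]
    have hps : ({-Mtot, -Mtot + d} : Multiset (ZMod p)) = {-Mtot} + {-Mtot + d} := by
      rw [Multiset.singleton_add]
      rfl
    rw [hps, smul_add, Multiset.nsmul_singleton, Multiset.nsmul_singleton, hLval]
  exact ⟨-Mtot, d, hordd, hgood⟩

end PrimeCase

theorem hardP : ∀ n : ℕ, 0 < n → P n := by
  intro n
  induction n using Nat.strong_induction_on with
  | _ n IH =>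
    intro hn
    rcases (show n = 1 ∨ n = 2 ∨ n = 3 ∨ 4 ≤ n by omega) with rfl | rfl | rfl | h4
    · exact P1
    · exact P2
    · exact P3
    · by_cases hprime : n.Prime
      · rcases (show n = 4 ∨ 5 ≤ n by omega) with rfl | h5
        · exact absurd hprime (by decide)
        · exact prime_case hprime h5
      · have hn1 : n ≠ 1 := by omega
        set q := n.minFac with hq
        have hqprime : q.Prime := Nat.minFac_prime hn1
        have hqdvd : q ∣ n := Nat.minFac_dvd n
        obtain ⟨mq, hnm⟩ : ∃ mq, n = q * mq := ⟨n / q, (Nat.mul_div_cancel' hqdvd).symm⟩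
        have hq2 : 2 ≤ q := hqprime.two_le
        have hmq1 : mq ≠ 1 := by
          intro h
          rw [h, mul_one] at hnm
          exact hprime (hnm ▸ hqprime)
        have hmq0 : mq ≠ 0 := by
          intro h
          rw [h, mul_zero] at hnm
          omega
        have hm2 : 2 ≤ mq := by omega
        have hqlt : q < n := by
          have h2q : q * 2 ≤ q * mq := Nat.mul_le_mul_left q hm2
          rw [← hnm] at h2q
          omega
        have hmlt : mq < n := by
          have h2m : 2 * mq ≤ q * mq := Nat.mul_le_mul_right mq hq2
          rw [← hnm] at h2m
          omega
        have hres := composite_case hq2 hm2 (IH q hqlt (by omega)) (IH mq hmlt (Nat.pos_of_ne_zero hmq0))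
        rw [hnm]
        exact hres

end Stmt14

/-- A sequence `S` over `C_n` of length `2n - 2` has no zero-sum subsequence
of length `n` if and only if `S = g^{n-1} (g+e)^{n-1}` for some `g, e ∈ C_n` with `e` a
generator of `C_n`. -/
theorem stmt_14 (n : ℕ) (hn : 0 < n) (S : Multiset (ZMod n))
    (hcard : S.card = 2 * n - 2) :
    (¬ ∃ T ≤ S, T.sum = 0 ∧ Multiset.card T = n) ↔
    ∃ g e : ZMod n, addOrderOf e = n ∧
      S = Multiset.replicate (n - 1) g + Multiset.replicate (n - 1) (g + e) := by
  constructor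
  · intro h
    exact Stmt14.hardP n hn S hcard (fun T hT hc hs => h ⟨T, hT, hs, hc⟩)
  · rintro ⟨g, e, he, rfl⟩ ⟨T, hT, hs, hc⟩
    exact Stmt14.easy n hn g e he T hT hc hs
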